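/- Let k ≥ 0 and set n = 4k+1. Then every first move in MS(P_n) is optimal: for every integer m with 1 ≤ m ≤ n, (1/n)·((m−1)·(1−v(m−1)) + (n−m)·(1−v(n−m))) = v(4k+1). -/
import Mathlib


/-- Optimal first-player winning probability in the misère search game `MS(P_n)`:
`v 0 = 0` and for `n ≥ 1`,
`v n = max_{1 ≤ m ≤ n} (1/n) * ((m-1) * (1 - v (m-1)) + (n-m) * (1 - v (n-m)))`. -/
noncomputable def v : ℕ → ℝ
  | 0 => 0
  | n + 1 =>
    (Finset.Icc 1 (n + 1)).attach.sup'
      (Finset.attach_nonempty_iff.mpr ⟨1, by simp⟩)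
      (fun m => (1 / ((n : ℝ) + 1)) *
        (((m.1 - 1 : ℕ) : ℝ) * (1 - v (m.1 - 1)) +
         ((n + 1 - m.1 : ℕ) : ℝ) * (1 - v (n + 1 - m.1))))
  decreasing_by
  · have hm := m.2; simp only [Finset.mem_Icc] at hm; omega
  · have hm := m.2; simp only [Finset.mem_Icc] at hm; omega

def c (n : ℕ) : ℕ := n / 4 + (n + 3) / 4

lemma v_mul : ∀ n : ℕ, (n : ℝ) * (1 - v n) = c n := by
  intro n
  induction n using Nat.strong_induction_on with
  | _ n ih =>
    match n with
    | 0 => simp [c, v]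
    | n + 1 =>
      have hpos : (0:ℝ) < (n:ℝ) + 1 := by positivity
      have hv : v (n+1) = (((n+3)/4 + (n+2)/4 : ℕ) : ℝ) / ((n:ℝ)+1) := by
        rw [v]
        apply le_antisymm
        · apply Finset.sup'_le
          intro m _
          have hm := m.2
          simp only [Finset.mem_Icc] at hm
          rw [ih (m.1 - 1) (by omega), ih (n + 1 - m.1) (by omega)]
          have hle : c (m.1-1) + c (n+1-m.1) ≤ (n+3)/4 + (n+2)/4 := by
            simp only [c]; omega
          rw [one_div, inv_mul_eq_div]
          gcongr
          exact_mod_cast hle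
        · have hmem : min 2 (n+1) ∈ Finset.Icc 1 (n+1) := by
            simp only [Finset.mem_Icc]; omega
          refine le_trans (le_of_eq ?_)
            (Finset.le_sup' _ (Finset.mem_attach _ (⟨min 2 (n+1), hmem⟩ : {x // x ∈ Finset.Icc 1 (n+1)})))
          rw [ih (min 2 (n+1) - 1) (by omega), ih (n + 1 - min 2 (n+1)) (by omega)]
          have heq : c (min 2 (n+1) - 1) + c (n+1- min 2 (n+1)) = (n+3)/4 + (n+2)/4 := by
            simp only [c]; omega
          rw [one_div, inv_mul_eq_div]
          rw [← Nat.cast_add, heq]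
      rw [hv]
      have hD : ((n+3)/4 + (n+2)/4) + c (n+1) = n+1 := by simp only [c]; omega
      have hne : ((n:ℝ)+1) ≠ 0 := ne_of_gt hpos
      have hDr : (((n+3)/4 + (n+2)/4 : ℕ):ℝ) + (c (n+1):ℝ) = (n:ℝ)+1 := by
        exact_mod_cast hD
      push_cast at hDr ⊢
      field_simp
      nlinarith [hDr]

/-- For `n = 4k+1`, every first move `m` with `1 ≤ m ≤ n` is optimal in `MS(P_n)`. -/
theorem misere_path_optimal_move_4k1 (k m : ℕ) (hm1 : 1 ≤ m) (hm2 : m ≤ 4 * k + 1) :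
    (1 / ((4 * k + 1 : ℕ) : ℝ)) *
      (((m - 1 : ℕ) : ℝ) * (1 - v (m - 1)) +
       ((4 * k + 1 - m : ℕ) : ℝ) * (1 - v (4 * k + 1 - m))) = v (4 * k + 1) := by
  have h1 := v_mul (m - 1)
  have h2 := v_mul (4 * k + 1 - m)
  have h3 := v_mul (4 * k + 1)
  rw [h1, h2]
  have hc : c (m-1) + c (4*k+1-m) = 2*k := by simp only [c]; omega
  have hc3 : c (4*k+1) = 2*k+1 := by simp only [c]; omega
  rw [hc3] at h3
  have hpos : (0:ℝ) < ((4*k+1:ℕ):ℝ) := by positivity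
  rw [← Nat.cast_add, hc]
  push_cast at h3 ⊢
  have hne : (4*(k:ℝ)+1) ≠ 0 := by positivity
  field_simp
  nlinarith [h3]
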